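/- Let 0 < α ≤ β and let M := [α,β] × S². Define f^∞(r,s,ξ,η) := ‖ξ‖ + χ_{{0}}(ξ)‖η‖ + ‖rη + s⊗ξ‖, where χ_{{0}}(ξ) = 1 if ξ = 0 and χ_{{0}}(ξ) = 0 otherwise. For ν ∈ S¹ let ν^⊥ denote the rotation of ν by π/2, let S_ν := {y ∈ ℝ² : |y·ν| ≤ 1/2}, and let Q_ν be the open unit square centered at the origin with two sides orthogonal to ν. For a, b ∈ M define K_Lip(a,b,ν) := inf{ ∫_{Q_ν} f^∞(φ(y), ψ(y), ∇φ(y), ∇ψ(y)) dy : θ = (φ,ψ) : S_ν → M Lipschitz, θ(y + ν^⊥) = θ(y) for all y ∈ S_ν, θ(y) = a whenever y·ν = −1/2, θ(y) = b whenever y·ν = 1/2 }. Then there exists a constant C > 0, depending only on α and β, such that for all a, b ∈ M and all ν ∈ S¹: K_Lip(a,b,ν) ≤ C‖a − b‖. -/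

import Mathlib

open scoped Classical ENNReal NNReal
open MeasureTheory

set_option maxHeartbeats 1000000

noncomputable section

abbrev E2 : Type := EuclideanSpace ℝ (Fin 2)
abbrev E3 : Type := EuclideanSpace ℝ (Fin 3)
abbrev E32 : Type := EuclideanSpace ℝ (Fin 3 × Fin 2)

/-- `ℝ × ℝ³` endowed with the Euclidean (ℓ²) norm, i.e. `ℝ⁴`. -/
abbrev PR : Type := WithLp 2 (ℝ × E3)

/-- The tensor product `s ⊗ ξ`, viewed as a 3×2 matrix endowed with the
Frobenius (Euclidean) norm. -/
def tens (s : E3) (ξ : E2) : E32 := WithLp.toLp 2 (fun p : Fin 3 × Fin 2 => s p.1 * ξ p.2)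

/-- The recession function
`f^∞(r,s,ξ,η) = ‖ξ‖ + χ_{{0}}(ξ)‖η‖ + ‖rη + s⊗ξ‖`. -/
def finf (r : ℝ) (s : E3) (ξ : E2) (η : E32) : ℝ :=
  ‖ξ‖ + (if ξ = 0 then (1 : ℝ) else 0) * ‖η‖ + ‖r • η + tens s ξ‖

/-- The rotation of `ν ∈ ℝ²` by `π/2`. -/
def perp (ν : E2) : E2 := WithLp.toLp 2 (fun i : Fin 2 => if i = 0 then -(ν 1) else ν 0)

/-- The closed slab `S_ν = {y ∈ ℝ² : |y·ν| ≤ 1/2}`. -/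
def slab (ν : E2) : Set E2 := {y | |(inner ℝ y ν : ℝ)| ≤ 1/2}

/-- The open unit square `Q_ν` centered at the origin with two sides
orthogonal to `ν`. -/
def cubeNu (ν : E2) : Set E2 :=
  {y | |(inner ℝ y ν : ℝ)| < 1/2 ∧ |(inner ℝ y (perp ν) : ℝ)| < 1/2}

/-- The gradient `∇φ(y) ∈ ℝ²` of a scalar function `φ : ℝ² → ℝ`. -/
def gradv (φ : E2 → ℝ) (y : E2) : E2 :=
  WithLp.toLp 2 (fun j : Fin 2 => fderiv ℝ φ y (EuclideanSpace.single j 1))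

/-- The gradient `∇ψ(y) ∈ ℝ^{3×2}` of a vector-valued function `ψ : ℝ² → ℝ³`. -/
def gradm (ψ : E2 → E3) (y : E2) : E32 :=
  WithLp.toLp 2 (fun p : Fin 3 × Fin 2 => fderiv ℝ ψ y (EuclideanSpace.single p.2 1) p.1)

/-- The jump energy density `K_Lip(a,b,ν)` with Lipschitz transition profiles:
the infimum of `∫_{Q_ν} f^∞(φ, ψ, ∇φ, ∇ψ)` over Lipschitz maps
`θ = (φ,ψ) : S_ν → [α,β] × S²` that are 1-periodic in the direction `ν^⊥`
and take the values `a` and `b` on the faces `{y·ν = -1/2}` and `{y·ν = 1/2}`. -/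
def KLip (α β : ℝ) (a b : PR) (ν : E2) : ℝ :=
  sInf {v : ℝ | ∃ φ : E2 → ℝ, ∃ ψ : E2 → E3, ∃ K : NNReal,
    LipschitzOnWith K φ (slab ν) ∧ LipschitzOnWith K ψ (slab ν) ∧
    (∀ y ∈ slab ν, φ y ∈ Set.Icc α β ∧ ‖ψ y‖ = 1) ∧
    (∀ y ∈ slab ν, φ (y + perp ν) = φ y ∧ ψ (y + perp ν) = ψ y) ∧
    (∀ y : E2, (inner ℝ y ν : ℝ) = -(1/2) → φ y = a.ofLp.1 ∧ ψ y = a.ofLp.2) ∧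
    (∀ y : E2, (inner ℝ y ν : ℝ) = 1/2 → φ y = b.ofLp.1 ∧ ψ y = b.ofLp.2) ∧
    v = ∫ y in cubeNu ν, finf (φ y) (ψ y) (gradv φ y) (gradm ψ y)}

lemma finf_nonneg (r : ℝ) (s : E3) (ξ : E2) (η : E32) : 0 ≤ finf r s ξ η := by
  unfold finf
  have h : 0 ≤ (if ξ = 0 then (1:ℝ) else 0) := by split_ifs <;> norm_num
  exact add_nonneg (add_nonneg (norm_nonneg _) (mul_nonneg h (norm_nonneg _))) (norm_nonneg _)

lemma coord_le_norm {ι : Type*} [Fintype ι] (x : EuclideanSpace ℝ ι) (i : ι) :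
    |x i| ≤ ‖x‖ := by
  rw [EuclideanSpace.norm_eq, ← Real.sqrt_sq_eq_abs]
  apply Real.sqrt_le_sqrt
  have := Finset.single_le_sum (f := fun j => ‖x j‖ ^ 2) (fun j _ => by positivity)
    (Finset.mem_univ i)
  simpa [Real.norm_eq_abs, sq_abs] using this

lemma norm_le_sum_abs {ι : Type*} [Fintype ι] (x : EuclideanSpace ℝ ι) :
    ‖x‖ ≤ ∑ i, |x i| := by
  rw [EuclideanSpace.norm_eq]
  have h1 : ∑ i, ‖x i‖ ^ 2 ≤ (∑ i, |x i|) ^ 2 := by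
    simpa [Real.norm_eq_abs] using
      Finset.sum_sq_le_sq_sum_of_nonneg (s := Finset.univ) (f := fun i => |x i|)
        (fun i _ => abs_nonneg _)
  calc Real.sqrt (∑ i, ‖x i‖ ^ 2) ≤ Real.sqrt ((∑ i, |x i|) ^ 2) := Real.sqrt_le_sqrt h1
    _ = ∑ i, |x i| := Real.sqrt_sq (by positivity)

lemma tens_norm (s : E3) (ξ : E2) : ‖tens s ξ‖ = ‖s‖ * ‖ξ‖ := by
  rw [EuclideanSpace.norm_eq, EuclideanSpace.norm_eq, EuclideanSpace.norm_eq,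
    ← Real.sqrt_mul (by positivity)]
  congr 1
  rw [Finset.sum_mul_sum, ← Finset.sum_product']
  rw [show ((Finset.univ : Finset (Fin 3)) ×ˢ (Finset.univ : Finset (Fin 2))) = Finset.univ from rfl]
  exact Finset.sum_congr rfl fun p _ => by
    simp [tens, Real.norm_eq_abs, abs_mul, mul_pow]

lemma normalize_lip (x y : E3) (hx : (1:ℝ)/2 ≤ ‖x‖) (hy : (1:ℝ)/2 ≤ ‖y‖) :
    ‖(‖x‖⁻¹ • x) - (‖y‖⁻¹ • y)‖ ≤ 4 * ‖x - y‖ := by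
  have hx0 : (0:ℝ) < ‖x‖ := lt_of_lt_of_le (by norm_num) hx
  have hy0 : (0:ℝ) < ‖y‖ := lt_of_lt_of_le (by norm_num) hy
  have key : (‖x‖⁻¹ • x) - (‖y‖⁻¹ • y) = ‖x‖⁻¹ • (x - y) + (‖x‖⁻¹ - ‖y‖⁻¹) • y := by
    rw [smul_sub, sub_smul]; abel
  rw [key]
  have h1 : ‖‖x‖⁻¹ • (x - y)‖ ≤ 2 * ‖x - y‖ := by
    rw [norm_smul, Real.norm_eq_abs, abs_inv, abs_of_pos hx0]
    have : ‖x‖⁻¹ ≤ 2 := by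
      rw [inv_le_comm₀ hx0 (by norm_num)]; linarith
    nlinarith [norm_nonneg (x - y)]
  have h2 : ‖(‖x‖⁻¹ - ‖y‖⁻¹) • y‖ ≤ 2 * ‖x - y‖ := by
    rw [norm_smul, Real.norm_eq_abs]
    have heq : ‖x‖⁻¹ - ‖y‖⁻¹ = (‖y‖ - ‖x‖) / (‖x‖ * ‖y‖) := by field_simp
    rw [heq, abs_div, abs_of_pos (mul_pos hx0 hy0)]
    have h3 : |‖y‖ - ‖x‖| ≤ ‖x - y‖ := by
      rw [abs_sub_comm]; exact abs_norm_sub_norm_le x y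
    have h4 : |‖y‖ - ‖x‖| / (‖x‖ * ‖y‖) * ‖y‖ = |‖y‖ - ‖x‖| / ‖x‖ := by
      field_simp
    rw [h4, div_le_iff₀ hx0]
    nlinarith [abs_nonneg (‖y‖ - ‖x‖), norm_nonneg (x - y)]
  calc ‖‖x‖⁻¹ • (x - y) + (‖x‖⁻¹ - ‖y‖⁻¹) • y‖
      ≤ ‖‖x‖⁻¹ • (x - y)‖ + ‖(‖x‖⁻¹ - ‖y‖⁻¹) • y‖ := norm_add_le _ _
    _ ≤ 2 * ‖x - y‖ + 2 * ‖x - y‖ := add_le_add h1 h2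
    _ = 4 * ‖x - y‖ := by ring

lemma exists_orth (u v : E3) : ∃ m : E3, ‖m‖ = 1 ∧ (inner ℝ u m : ℝ) = 0 ∧ (inner ℝ v m : ℝ) = 0 := by
  classical
  set T : E3 →ₗ[ℝ] ℝ × ℝ :=
    LinearMap.prod ((innerSL ℝ u).toLinearMap) ((innerSL ℝ v).toLinearMap) with hT
  have hrank : Module.finrank ℝ (LinearMap.range T) + Module.finrank ℝ (LinearMap.ker T) =
      Module.finrank ℝ E3 := LinearMap.finrank_range_add_finrank_ker T
  have h3 : Module.finrank ℝ E3 = 3 := by simp [finrank_euclideanSpace]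
  have hle : Module.finrank ℝ (LinearMap.range T) ≤ 2 := by
    have := Submodule.finrank_le (LinearMap.range T)
    simpa using this
  have hker : 0 < Module.finrank ℝ (LinearMap.ker T) := by omega
  have hne : LinearMap.ker T ≠ ⊥ := by
    intro h; rw [h] at hker; simp at hker
  obtain ⟨x, hx, hx0⟩ := Submodule.exists_mem_ne_zero_of_ne_bot hne
  have hxn : ‖x‖ ≠ 0 := norm_ne_zero_iff.2 hx0
  refine ⟨‖x‖⁻¹ • x, ?_, ?_, ?_⟩
  · rw [norm_smul, Real.norm_eq_abs, abs_inv, abs_of_pos (norm_pos_iff.2 hx0),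
      inv_mul_cancel₀ hxn]
  · have h : (inner ℝ u x : ℝ) = 0 := by
      have := congrArg Prod.fst (LinearMap.mem_ker.1 hx)
      simpa [hT] using this
    rw [inner_smul_right, h, mul_zero]
  · have h : (inner ℝ v x : ℝ) = 0 := by
      have := congrArg Prod.snd (LinearMap.mem_ker.1 hx)
      simpa [hT] using this
    rw [inner_smul_right, h, mul_zero]

lemma inner_two (y ν : E2) : (inner ℝ y ν : ℝ) = y 0 * ν 0 + y 1 * ν 1 := by
  simp [PiLp.inner_apply, RCLike.inner_apply, Fin.sum_univ_two, mul_comm]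

lemma nu_sq (ν : E2) (hν : ‖ν‖ = 1) : ν 0 ^ 2 + ν 1 ^ 2 = 1 := by
  have h := hν
  rw [EuclideanSpace.norm_eq] at h
  have h2 : (∑ i, ‖ν i‖ ^ 2) = 1 := Real.sqrt_eq_one.1 h
  simpa [Fin.sum_univ_two, Real.norm_eq_abs, sq_abs] using h2

lemma cube_subset (ν : E2) (hν : ‖ν‖ = 1) :
    cubeNu ν ⊆ {y : E2 | ∀ i, y i ∈ Set.Icc (-1:ℝ) 1} := by
  intro y hy
  obtain ⟨h1, h2⟩ := hy
  rw [inner_two] at h1 h2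
  have hp0 : perp ν 0 = -(ν 1) := rfl
  have hp1 : perp ν 1 = ν 0 := rfl
  rw [hp0, hp1] at h2
  have hn := nu_sq ν hν
  have e1 : (y 0 * ν 0 + y 1 * ν 1)^2 < 1/4 := by
    nlinarith [abs_nonneg (y 0 * ν 0 + y 1 * ν 1), sq_abs (y 0 * ν 0 + y 1 * ν 1)]
  have e2 : (y 0 * -(ν 1) + y 1 * ν 0)^2 < 1/4 := by
    nlinarith [abs_nonneg (y 0 * -(ν 1) + y 1 * ν 0), sq_abs (y 0 * -(ν 1) + y 1 * ν 0)]
  have key : y 0 ^ 2 + y 1 ^ 2 < 1/2 := by nlinarith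
  have h0 : ((-1:ℝ) ≤ y 0 ∧ y 0 ≤ 1) ∧ ((-1:ℝ) ≤ y 1 ∧ y 1 ≤ 1) := by
    refine ⟨⟨?_, ?_⟩, ⟨?_, ?_⟩⟩ <;> nlinarith
  intro i
  fin_cases i
  · exact h0.1
  · exact h0.2

lemma vol_cube (ν : E2) (hν : ‖ν‖ = 1) : volume (cubeNu ν) ≤ 4 := by
  have hsub := cube_subset ν hν
  have hB : {y : E2 | ∀ i, y i ∈ Set.Icc (-1:ℝ) 1} =
      (MeasurableEquiv.toLp 2 (Fin 2 → ℝ)).symm ⁻¹' (Set.univ.pi fun _ => Set.Icc (-1:ℝ) 1) := by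
    ext y
    simp only [Set.mem_setOf_eq, Set.mem_preimage, Set.mem_univ_pi]
    rfl
  calc volume (cubeNu ν) ≤ volume {y : E2 | ∀ i, y i ∈ Set.Icc (-1:ℝ) 1} := measure_mono hsub
    _ = volume (Set.univ.pi fun _ : Fin 2 => Set.Icc (-1:ℝ) 1) := by
        rw [hB]
        exact (EuclideanSpace.volume_preserving_symm_measurableEquiv_toLp (Fin 2)).measure_preimage
          (MeasurableSet.univ_pi fun _ => measurableSet_Icc).nullMeasurableSet
    _ = ∏ _i : Fin 2, volume (Set.Icc (-1:ℝ) 1) := volume_pi_pi _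
    _ = 4 := by
        rw [Real.volume_Icc, Finset.prod_const]
        norm_num

lemma key_lemma (α β : ℝ) (hα : 0 < α) (hαβ : α ≤ β)
    (a b : PR) (ha1 : a.ofLp.1 ∈ Set.Icc α β) (ha2 : ‖a.ofLp.2‖ = 1)
    (hb1 : b.ofLp.1 ∈ Set.Icc α β) (hb2 : ‖b.ofLp.2‖ = 1)
    (ν : E2) (hν : ‖ν‖ = 1)
    (w : ℝ → E3) (L : ℝ) (hL : 0 ≤ L)
    (hw : ∀ s ∈ Set.Icc (0:ℝ) 1, ∀ t ∈ Set.Icc (0:ℝ) 1, ‖w s - w t‖ ≤ L * |s - t|)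
    (hw0 : w 0 = a.ofLp.2) (hw1 : w 1 = b.ofLp.2)
    (hwn : ∀ s ∈ Set.Icc (0:ℝ) 1, (1:ℝ)/2 ≤ ‖w s‖) :
    KLip α β a b ν ≤ 16 * |b.ofLp.1 - a.ofLp.1| + 96 * (1 + β) * L := by
  have hβ0 : (0:ℝ) ≤ β := le_trans hα.le hαβ
  set q : E2 → ℝ := fun y => min 1 (max 0 ((inner ℝ y ν : ℝ) + 1/2)) with hq
  set φ : E2 → ℝ := fun y => a.ofLp.1 + q y * (b.ofLp.1 - a.ofLp.1) with hφ
  set ψ : E2 → E3 := fun y => ‖w (q y)‖⁻¹ • w (q y) with hψ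
  have hq0 : ∀ y, 0 ≤ q y := fun y => le_min zero_le_one (le_max_left 0 _)
  have hq1 : ∀ y, q y ≤ 1 := fun y => min_le_left _ _
  have hwq : ∀ y, (1:ℝ)/2 ≤ ‖w (q y)‖ := fun y => hwn _ ⟨hq0 y, hq1 y⟩
  have hwqne : ∀ y, ‖w (q y)‖ ≠ 0 := fun y => by
    have := hwq y; positivity
  -- Lipschitz of q
  have hip : LipschitzWith 1 (fun y : E2 => (inner ℝ y ν : ℝ) + 1/2) := by
    apply LipschitzWith.of_dist_le_mul
    intro x z
    rw [Real.dist_eq, add_sub_add_right_eq_sub, ← inner_sub_left]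
    calc |(inner ℝ (x - z) ν : ℝ)| ≤ ‖x - z‖ * ‖ν‖ := abs_real_inner_le_norm _ _
      _ = ↑(1:NNReal) * dist x z := by rw [hν, mul_one, dist_eq_norm]; simp
  have hqlip : LipschitzWith 1 q := (hip.const_max 0).const_min 1
  have hqd : ∀ y z : E2, |q y - q z| ≤ ‖y - z‖ := by
    intro y z
    have := hqlip.dist_le_mul y z
    simpa [Real.dist_eq, dist_eq_norm] using this
  -- Lipschitz of φ
  have hφlip : LipschitzWith ‖b.ofLp.1 - a.ofLp.1‖₊ φ := by
    apply LipschitzWith.of_dist_le_mul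
    intro x z
    rw [Real.dist_eq]
    have e : φ x - φ z = (q x - q z) * (b.ofLp.1 - a.ofLp.1) := by simp only [hφ]; ring
    rw [e, abs_mul]
    calc |q x - q z| * |b.ofLp.1 - a.ofLp.1| ≤ ‖x - z‖ * |b.ofLp.1 - a.ofLp.1| := by
          have := hqd x z
          have h0 : (0:ℝ) ≤ |b.ofLp.1 - a.ofLp.1| := abs_nonneg _
          nlinarith
      _ = ↑‖b.ofLp.1 - a.ofLp.1‖₊ * dist x z := by
          rw [coe_nnnorm, Real.norm_eq_abs, dist_eq_norm]; ring
  -- Lipschitz of ψ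
  have hψlip : LipschitzWith (4*L).toNNReal ψ := by
    apply LipschitzWith.of_dist_le_mul
    intro x z
    rw [dist_eq_norm]
    calc ‖ψ x - ψ z‖ ≤ 4 * ‖w (q x) - w (q z)‖ := normalize_lip _ _ (hwq x) (hwq z)
      _ ≤ 4 * (L * |q x - q z|) := by
          have := hw (q x) ⟨hq0 x, hq1 x⟩ (q z) ⟨hq0 z, hq1 z⟩
          nlinarith
      _ ≤ 4 * (L * ‖x - z‖) := by
          have := hqd x z
          have h0 : (0:ℝ) ≤ |q x - q z| := abs_nonneg _
          nlinarith
      _ = ↑(4*L).toNNReal * dist x z := by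
          rw [Real.coe_toNNReal _ (by positivity), dist_eq_norm]; ring
  -- values
  have hφmem : ∀ y, φ y ∈ Set.Icc α β := by
    intro y
    have e : φ y = (1 - q y) * a.ofLp.1 + q y * b.ofLp.1 := by simp only [hφ]; ring
    have h1 := mul_le_mul_of_nonneg_left ha1.1 (by linarith [hq1 y] : (0:ℝ) ≤ 1 - q y)
    have h2 := mul_le_mul_of_nonneg_left hb1.1 (hq0 y)
    have h3 := mul_le_mul_of_nonneg_left ha1.2 (by linarith [hq1 y] : (0:ℝ) ≤ 1 - q y)
    have h4 := mul_le_mul_of_nonneg_left hb1.2 (hq0 y)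
    constructor <;> (rw [e]; nlinarith)
  have hψnorm : ∀ y, ‖ψ y‖ = 1 := by
    intro y
    simp only [hψ]
    rw [norm_smul, Real.norm_eq_abs, abs_inv, abs_of_nonneg (norm_nonneg _),
      inv_mul_cancel₀ (hwqne y)]
  -- periodicity
  have hperp0 : (inner ℝ (perp ν) ν : ℝ) = 0 := by
    rw [inner_two]
    have hp0 : perp ν 0 = -(ν 1) := rfl
    have hp1 : perp ν 1 = ν 0 := rfl
    rw [hp0, hp1]; ring
  have hqper : ∀ y : E2, q (y + perp ν) = q y := by
    intro y
    simp only [hq]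
    rw [inner_add_left, hperp0, add_zero]
  -- boundary values
  have hqbdry0 : ∀ y : E2, (inner ℝ y ν : ℝ) = -(1/2) → q y = 0 := by
    intro y hy; simp only [hq, hy]; norm_num
  have hqbdry1 : ∀ y : E2, (inner ℝ y ν : ℝ) = 1/2 → q y = 1 := by
    intro y hy; simp only [hq, hy]; norm_num
  -- gradient bounds
  have hgv : ∀ y, ‖gradv φ y‖ ≤ 2 * |b.ofLp.1 - a.ofLp.1| := by
    intro y
    calc ‖gradv φ y‖ ≤ ∑ j, |gradv φ y j| := norm_le_sum_abs _
      _ ≤ ∑ _j : Fin 2, |b.ofLp.1 - a.ofLp.1| := by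
          apply Finset.sum_le_sum
          intro j _
          have h1 : |gradv φ y j| = ‖(fderiv ℝ φ y) (EuclideanSpace.single j 1)‖ := by
            simp [gradv, Real.norm_eq_abs]
          rw [h1]
          calc ‖(fderiv ℝ φ y) (EuclideanSpace.single j 1)‖
              ≤ ‖fderiv ℝ φ y‖ * ‖EuclideanSpace.single j (1:ℝ)‖ :=
                ContinuousLinearMap.le_opNorm _ _
            _ = ‖fderiv ℝ φ y‖ := by rw [EuclideanSpace.norm_single]; simp
            _ ≤ ↑‖b.ofLp.1 - a.ofLp.1‖₊ := norm_fderiv_le_of_lipschitz ℝ hφlip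
            _ = |b.ofLp.1 - a.ofLp.1| := by rw [coe_nnnorm, Real.norm_eq_abs]
      _ = 2 * |b.ofLp.1 - a.ofLp.1| := by
          rw [Finset.sum_const]; simp [Finset.card_univ]; try ring
  have hgm : ∀ y, ‖gradm ψ y‖ ≤ 24 * L := by
    intro y
    calc ‖gradm ψ y‖ ≤ ∑ p, |gradm ψ y p| := norm_le_sum_abs _
      _ ≤ ∑ _p : Fin 3 × Fin 2, 4 * L := by
          apply Finset.sum_le_sum
          intro p _
          calc |gradm ψ y p| = |(fderiv ℝ ψ y) (EuclideanSpace.single p.2 1) p.1| := rfl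
            _ ≤ ‖(fderiv ℝ ψ y) (EuclideanSpace.single p.2 1)‖ := coord_le_norm _ _
            _ ≤ ‖fderiv ℝ ψ y‖ * ‖EuclideanSpace.single p.2 (1:ℝ)‖ :=
                ContinuousLinearMap.le_opNorm _ _
            _ = ‖fderiv ℝ ψ y‖ := by rw [EuclideanSpace.norm_single]; simp
            _ ≤ ↑(4*L).toNNReal := norm_fderiv_le_of_lipschitz ℝ hψlip
            _ = 4 * L := Real.coe_toNNReal _ (by positivity)
      _ = 24 * L := by
          rw [Finset.sum_const]; simp [Finset.card_univ]; try ring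
  -- pointwise bound
  set c : ℝ := 4 * |b.ofLp.1 - a.ofLp.1| + 24 * (1 + β) * L with hc
  have hc0 : 0 ≤ c := by
    have : (0:ℝ) ≤ 24 * (1 + β) * L := by
      apply mul_nonneg (by nlinarith) hL
    positivity
  have hpt : ∀ y, finf (φ y) (ψ y) (gradv φ y) (gradm ψ y) ≤ c := by
    intro y
    have hb3 : ‖φ y • gradm ψ y + tens (ψ y) (gradv φ y)‖ ≤ β * (24 * L) + 2 * |b.ofLp.1 - a.ofLp.1| := by
      calc ‖φ y • gradm ψ y + tens (ψ y) (gradv φ y)‖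
          ≤ ‖φ y • gradm ψ y‖ + ‖tens (ψ y) (gradv φ y)‖ := norm_add_le _ _
        _ = |φ y| * ‖gradm ψ y‖ + ‖ψ y‖ * ‖gradv φ y‖ := by
            rw [norm_smul, tens_norm, Real.norm_eq_abs]
        _ ≤ β * (24 * L) + 2 * |b.ofLp.1 - a.ofLp.1| := by
            have hm := hφmem y
            have habs : |φ y| ≤ β := abs_le.2 ⟨by linarith [hm.1], hm.2⟩
            have h5 := hgm y
            have h6 := hgv y
            have h7 := hψnorm y
            rw [h7, one_mul]
            have h8 : |φ y| * ‖gradm ψ y‖ ≤ β * (24 * L) := by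
              apply mul_le_mul habs h5 (norm_nonneg _) hβ0
            linarith
    have hchi : (if gradv φ y = 0 then (1:ℝ) else 0) * ‖gradm ψ y‖ ≤ 24 * L := by
      split_ifs
      · rw [one_mul]; exact hgm y
      · rw [zero_mul]; positivity
    have h6 := hgv y
    simp only [finf, hc]
    linarith
  -- the integral is a member of the admissible set and is bounded
  have hAmeas : MeasurableSet (cubeNu ν) := by
    have hc1 : Continuous fun y : E2 => |(inner ℝ y ν : ℝ)| :=
      (Continuous.inner continuous_id continuous_const).abs
    have hc2 : Continuous fun y : E2 => |(inner ℝ y (perp ν) : ℝ)| :=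
      (Continuous.inner continuous_id continuous_const).abs
    have : cubeNu ν = {y : E2 | |(inner ℝ y ν : ℝ)| < 1/2} ∩
        {y : E2 | |(inner ℝ y (perp ν) : ℝ)| < 1/2} := rfl
    rw [this]
    exact ((isOpen_lt hc1 continuous_const).inter (isOpen_lt hc2 continuous_const)).measurableSet
  have hvol : (volume (cubeNu ν)).toReal ≤ 4 := by
    have h := vol_cube ν hν
    have := ENNReal.toReal_mono (by norm_num : (4:ℝ≥0∞) ≠ ⊤) h
    simpa using this
  have hIntBound : (∫ y in cubeNu ν, finf (φ y) (ψ y) (gradv φ y) (gradm ψ y)) ≤ c * 4 := by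
    by_cases hInt : IntegrableOn (fun y => finf (φ y) (ψ y) (gradv φ y) (gradm ψ y)) (cubeNu ν) volume
    · calc (∫ y in cubeNu ν, finf (φ y) (ψ y) (gradv φ y) (gradm ψ y))
          ≤ ∫ _y in cubeNu ν, c := by
            apply setIntegral_mono_on hInt _ hAmeas (fun y _ => hpt y)
            exact integrableOn_const (lt_of_le_of_lt (vol_cube ν hν) (by norm_num)).ne
        _ = c * (volume (cubeNu ν)).toReal := by rw [setIntegral_const, smul_eq_mul]; exact mul_comm _ _
        _ ≤ c * 4 := mul_le_mul_of_nonneg_left hvol hc0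
    · rw [MeasureTheory.integral_undef hInt]
      positivity
  unfold KLip
  refine le_trans (csInf_le ?_ ?_) (hIntBound.trans (le_of_eq (by rw [hc]; ring)))
  · refine ⟨0, fun v hv => ?_⟩
    obtain ⟨φ', ψ', K', _, _, _, _, _, _, hv⟩ := hv
    rw [hv]
    exact integral_nonneg fun y => finf_nonneg _ _ _ _
  · have hφon : LipschitzOnWith (‖b.ofLp.1 - a.ofLp.1‖₊ ⊔ (4*L).toNNReal) φ (slab ν) :=
      (hφlip.weaken le_sup_left).lipschitzOnWith
    have hψon : LipschitzOnWith (‖b.ofLp.1 - a.ofLp.1‖₊ ⊔ (4*L).toNNReal) ψ (slab ν) :=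
      (hψlip.weaken le_sup_right).lipschitzOnWith
    refine ⟨φ, ψ, ‖b.ofLp.1 - a.ofLp.1‖₊ ⊔ (4*L).toNNReal, hφon, hψon,
      fun y _ => ⟨hφmem y, hψnorm y⟩,
      fun y _ => ?_, fun y hy => ?_, fun y hy => ?_, rfl⟩
    · constructor
      · simp only [hφ, hqper y]
      · simp only [hψ, hqper y]
    · constructor
      · simp only [hφ, hqbdry0 y hy]; ring
      · simp only [hψ, hqbdry0 y hy, hw0, ha2]; norm_num
    · constructor
      · simp only [hφ, hqbdry1 y hy]; ring
      · simp only [hψ, hqbdry1 y hy, hw1, hb2]; norm_num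

theorem stmt19 (α β : ℝ) (hα : 0 < α) (hαβ : α ≤ β) :
    ∃ C : ℝ, 0 < C ∧
      ∀ a b : PR, (a.ofLp.1 ∈ Set.Icc α β ∧ ‖a.ofLp.2‖ = 1) → (b.ofLp.1 ∈ Set.Icc α β ∧ ‖b.ofLp.2‖ = 1) →
      ∀ ν : E2, ‖ν‖ = 1 →
      KLip α β a b ν ≤ C * ‖a - b‖ := by
  have hβ0 : (0:ℝ) ≤ β := le_trans hα.le hαβ
  refine ⟨16 + 384 * (1 + β), by nlinarith, ?_⟩
  rintro a b ⟨ha1, ha2⟩ ⟨hb1, hb2⟩ ν hν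
  have hnormsq : ‖a - b‖^2 = ‖(a-b).fst‖^2 + ‖(a-b).snd‖^2 := WithLp.prod_norm_sq_eq_of_L2 _
  have hsf : ‖(a-b).fst‖ = |a.ofLp.1 - b.ofLp.1| := by rw [WithLp.sub_fst]; exact Real.norm_eq_abs _
  have hss : ‖(a-b).snd‖ = ‖a.ofLp.2 - b.ofLp.2‖ := by rw [WithLp.sub_snd]; rfl
  have hfst : |a.ofLp.1 - b.ofLp.1| ≤ ‖a - b‖ := by
    nlinarith [norm_nonneg (a - b), norm_nonneg (a-b).snd, abs_nonneg (a.ofLp.1 - b.ofLp.1)]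
  have hsnd : ‖a.ofLp.2 - b.ofLp.2‖ ≤ ‖a - b‖ := by
    nlinarith [norm_nonneg (a - b), norm_nonneg (a.ofLp.2 - b.ofLp.2), norm_nonneg (a-b).fst]
  have hab0 : (0:ℝ) ≤ ‖a - b‖ := norm_nonneg _
  set r : ℝ := inner ℝ a.ofLp.2 b.ofLp.2 with hr
  have hr1 : r ≤ 1 := by
    have h := real_inner_le_norm a.ofLp.2 b.ofLp.2
    rw [ha2, hb2, mul_one] at h; exact h
  have hdsq : ‖b.ofLp.2 - a.ofLp.2‖^2 = 2 - 2*r := by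
    rw [norm_sub_sq_real, ha2, hb2]
    have h : (inner ℝ b.ofLp.2 a.ofLp.2 : ℝ) = r := real_inner_comm _ _
    rw [h]; ring
  have e1 : |b.ofLp.1 - a.ofLp.1| = |a.ofLp.1 - b.ofLp.1| := abs_sub_comm _ _
  have e2 : ‖b.ofLp.2 - a.ofLp.2‖ = ‖a.ofLp.2 - b.ofLp.2‖ := norm_sub_rev _ _
  have hsplit : (16 + 384*(1+β)) * ‖a - b‖ = 16*‖a - b‖ + 384*(1+β)*‖a - b‖ := by ring
  rcases le_or_gt 0 r with hr0 | hr0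
  · -- near case: normalized linear interpolation
    set w : ℝ → E3 := fun t => a.ofLp.2 + t • (b.ofLp.2 - a.ofLp.2) with hw
    have hwsub : ∀ s t : ℝ, w s - w t = (s - t) • (b.ofLp.2 - a.ofLp.2) := by
      intro s t; simp only [hw]; rw [add_sub_add_left_eq_sub, ← sub_smul]
    have hwl : ∀ s ∈ Set.Icc (0:ℝ) 1, ∀ t ∈ Set.Icc (0:ℝ) 1,
        ‖w s - w t‖ ≤ ‖b.ofLp.2 - a.ofLp.2‖ * |s - t| := by
      intro s _ t _
      rw [hwsub, norm_smul, Real.norm_eq_abs]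
      exact le_of_eq (mul_comm _ _)
    have hinn : (inner ℝ a.ofLp.2 (b.ofLp.2 - a.ofLp.2) : ℝ) = r - 1 := by
      rw [inner_sub_right, real_inner_self_eq_norm_sq, ha2, ← hr]; ring
    have hwn : ∀ s ∈ Set.Icc (0:ℝ) 1, (1:ℝ)/2 ≤ ‖w s‖ := by
      intro s hs
      have hws : ‖w s‖^2 = 1 + 2*(s*(r-1)) + s^2*(2-2*r) := by
        simp only [hw]
        rw [norm_add_sq_real, real_inner_smul_right, hinn, norm_smul, Real.norm_eq_abs,
          ha2, mul_pow, sq_abs, hdsq]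
        ring
      have k1 : s*(1-s) ≤ 1/4 := by nlinarith [sq_nonneg (s - 1/2)]
      have k2 : 0 ≤ s*(1-s) := mul_nonneg hs.1 (by linarith [hs.2])
      have k3 : (1-r)*(s*(1-s)) ≤ 1/4 := by nlinarith
      have k4 : ‖w s‖^2 = 1 - 2*((1-r)*(s*(1-s))) := by rw [hws]; ring
      nlinarith [norm_nonneg (w s), k4, k3]
    have h0 : w 0 = a.ofLp.2 := by simp [hw]
    have h1 : w 1 = b.ofLp.2 := by simp [hw]
    have hkey := key_lemma α β hα hαβ a b ha1 ha2 hb1 hb2 ν hν w ‖b.ofLp.2 - a.ofLp.2‖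
      (norm_nonneg _) hwl h0 h1 hwn
    have t1 : 16 * |b.ofLp.1 - a.ofLp.1| ≤ 16 * ‖a - b‖ := by rw [e1]; linarith
    have t2 : 96 * (1+β) * ‖b.ofLp.2 - a.ofLp.2‖ ≤ 96 * (1+β) * ‖a - b‖ := by
      apply mul_le_mul_of_nonneg_left _ (by nlinarith : (0:ℝ) ≤ 96 * (1+β))
      rw [e2]; exact hsnd
    have t3 : 96*(1+β)*‖a - b‖ ≤ 384*(1+β)*‖a - b‖ := by nlinarith
    rw [hsplit]; linarith
  · -- far case: path through an orthogonal unit vector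
    obtain ⟨m, hm, hma, hmb⟩ := exists_orth a.ofLp.2 b.ofLp.2
    set w : ℝ → E3 := fun t => if t ≤ 1/2 then a.ofLp.2 + (2*t) • (m - a.ofLp.2)
      else b.ofLp.2 + (2 - 2*t) • (m - b.ofLp.2) with hw
    have hma2 : ‖m - a.ofLp.2‖ ≤ 2 := by
      calc ‖m - a.ofLp.2‖ ≤ ‖m‖ + ‖a.ofLp.2‖ := norm_sub_le _ _
        _ = 2 := by rw [hm, ha2]; norm_num
    have hmb2 : ‖m - b.ofLp.2‖ ≤ 2 := by
      calc ‖m - b.ofLp.2‖ ≤ ‖m‖ + ‖b.ofLp.2‖ := norm_sub_le _ _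
        _ = 2 := by rw [hm, hb2]; norm_num
    -- distance from w s to m on each branch
    have hbr1 : ∀ s : ℝ, s ≤ 1/2 → w s - m = (2*s - 1) • (m - a.ofLp.2) := by
      intro s hs
      simp only [hw, if_pos hs]
      module
    have hbr2 : ∀ s : ℝ, ¬(s ≤ 1/2) → w s - m = (1 - 2*s) • (m - b.ofLp.2) := by
      intro s hs
      simp only [hw, if_neg hs]
      module
    have hdist1 : ∀ s : ℝ, s ≤ 1/2 → ‖w s - m‖ ≤ 2 * (1 - 2*s) := by
      intro s hs
      rw [hbr1 s hs, norm_smul, Real.norm_eq_abs, abs_of_nonpos (by linarith)]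
      nlinarith [norm_nonneg (m - a.ofLp.2)]
    have hdist2 : ∀ s : ℝ, ¬(s ≤ 1/2) → ‖w s - m‖ ≤ 2 * (2*s - 1) := by
      intro s hs
      have hs' : (1:ℝ)/2 < s := not_le.1 hs
      rw [hbr2 s hs, norm_smul, Real.norm_eq_abs, abs_of_nonpos (by linarith)]
      nlinarith [norm_nonneg (m - b.ofLp.2)]
    have hwl : ∀ s ∈ Set.Icc (0:ℝ) 1, ∀ t ∈ Set.Icc (0:ℝ) 1,
        ‖w s - w t‖ ≤ 4 * |s - t| := by
      intro s _ t _
      rcases le_or_gt s (1/2) with hs | hs <;> rcases le_or_gt t (1/2) with ht | ht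
      · have e : w s - w t = (2*s - 2*t) • (m - a.ofLp.2) := by
          simp only [hw, if_pos hs, if_pos ht]
          rw [add_sub_add_left_eq_sub, ← sub_smul]
        rw [e, norm_smul, Real.norm_eq_abs]
        have : |2*s - 2*t| = 2 * |s - t| := by
          rw [show 2*s - 2*t = 2*(s-t) by ring, abs_mul]; norm_num
        rw [this]
        nlinarith [abs_nonneg (s - t), norm_nonneg (m - a.ofLp.2)]
      · calc ‖w s - w t‖ ≤ ‖w s - m‖ + ‖m - w t‖ := norm_sub_le_norm_sub_add_norm_sub _ _ _
          _ ≤ 2 * (1 - 2*s) + 2 * (2*t - 1) := by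
              have := hdist1 s hs
              have h2 := hdist2 t (not_le.2 ht)
              rw [norm_sub_rev m (w t)]
              linarith
          _ ≤ 4 * |s - t| := by
              have : |s - t| = t - s := by rw [abs_sub_comm, abs_of_nonneg (by linarith)]
              rw [this]; linarith
      · calc ‖w s - w t‖ ≤ ‖w s - m‖ + ‖m - w t‖ := norm_sub_le_norm_sub_add_norm_sub _ _ _
          _ ≤ 2 * (2*s - 1) + 2 * (1 - 2*t) := by
              have := hdist2 s (not_le.2 hs)
              have h2 := hdist1 t ht
              rw [norm_sub_rev m (w t)]
              linarith
          _ ≤ 4 * |s - t| := by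
              have : |s - t| = s - t := abs_of_nonneg (by linarith)
              rw [this]; linarith
      · have e : w s - w t = ((2 - 2*s) - (2 - 2*t)) • (m - b.ofLp.2) := by
          simp only [hw, if_neg (not_le.2 hs), if_neg (not_le.2 ht)]
          rw [add_sub_add_left_eq_sub, ← sub_smul]
        rw [e, norm_smul, Real.norm_eq_abs]
        have : |(2 - 2*s) - (2 - 2*t)| = 2 * |s - t| := by
          rw [show (2 - 2*s) - (2 - 2*t) = 2*(t-s) by ring, abs_mul, abs_sub_comm t s]
          norm_num
        rw [this]
        nlinarith [abs_nonneg (s - t), norm_nonneg (m - b.ofLp.2)]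
    have hwn : ∀ s ∈ Set.Icc (0:ℝ) 1, (1:ℝ)/2 ≤ ‖w s‖ := by
      intro s _
      rcases le_or_gt s (1/2) with hs | hs
      · have e : w s = (1 - 2*s) • a.ofLp.2 + (2*s) • m := by
          simp only [hw, if_pos hs]
          module
        have hsq : ‖w s‖^2 = (1 - 2*s)^2 + (2*s)^2 := by
          rw [e, norm_add_sq_real, real_inner_smul_left, real_inner_smul_right, hma,
            norm_smul, norm_smul, Real.norm_eq_abs, Real.norm_eq_abs, ha2, hm,
            mul_pow, mul_pow, sq_abs, sq_abs]
          ring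
        nlinarith [norm_nonneg (w s), hsq, sq_nonneg (4*s - 1)]
      · have e : w s = (1 - (2 - 2*s)) • b.ofLp.2 + (2 - 2*s) • m := by
          simp only [hw, if_neg (not_le.2 hs)]
          module
        have hsq : ‖w s‖^2 = (1 - (2 - 2*s))^2 + (2 - 2*s)^2 := by
          rw [e, norm_add_sq_real, real_inner_smul_left, real_inner_smul_right, hmb,
            norm_smul, norm_smul, Real.norm_eq_abs, Real.norm_eq_abs, hb2, hm,
            mul_pow, mul_pow, sq_abs, sq_abs]
          ring
        nlinarith [norm_nonneg (w s), hsq, sq_nonneg (4*s - 3)]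
    have h0 : w 0 = a.ofLp.2 := by
      simp only [hw, if_pos (by norm_num : (0:ℝ) ≤ 1/2)]
      norm_num
    have h1 : w 1 = b.ofLp.2 := by
      simp only [hw, if_neg (by norm_num : ¬ (1:ℝ) ≤ 1/2)]
      norm_num
    have hkey := key_lemma α β hα hαβ a b ha1 ha2 hb1 hb2 ν hν w 4
      (by norm_num) hwl h0 h1 hwn
    have hfar : (1:ℝ) ≤ ‖a.ofLp.2 - b.ofLp.2‖ := by
      have h := hdsq
      rw [e2] at h
      nlinarith [norm_nonneg (a.ofLp.2 - b.ofLp.2)]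
    have hfar2 : (1:ℝ) ≤ ‖a - b‖ := le_trans hfar hsnd
    have t1 : 16 * |b.ofLp.1 - a.ofLp.1| ≤ 16 * ‖a - b‖ := by rw [e1]; linarith
    have t2 : 96 * (1+β) * 4 ≤ 384*(1+β)*‖a - b‖ := by nlinarith
    rw [hsplit]; linarith
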